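/- Let L_{-2} : ℤ[x^{±1}, v^{±2}] → ℤ[v^{±1}] be the ℤ[v^{±2}]-linear map sending x^a to v^{a²}, where q = v². Then for every nonnegative integer k, L_{-2}((x;q)_{k+1}(x^{-1};q)_{k+1}) = 2(1-v)·(-v²;-v)_{2k}. -/

import Mathlib

open LaurentPolynomial Finset

/-- The ring `ℤ[v^{±1}]` of Laurent polynomials in `v`. -/
noncomputable abbrev Rv := LaurentPolynomial ℤ

/-- The `ℤ[v^{±2}]`-linear "Laplace transform" on `ℤ[x^{±1}, v^{±2}]`
(modeled as Laurent polynomials in `x` over `ℤ[v^{±1}]`), sending `x^a ↦ g a`. -/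
noncomputable def Lap (g : ℤ → Rv) (f : LaurentPolynomial Rv) : Rv :=
  Finsupp.sum f.coeff fun a c => c * g a

section lap
variable (g : ℤ → Rv) (f f₁ f₂ : LaurentPolynomial Rv)

lemma lap_zero : Lap g 0 = 0 := Finsupp.sum_zero_index

lemma lap_add : Lap g (f₁ + f₂) = Lap g f₁ + Lap g f₂ :=
  Finsupp.sum_add_index (by simp) (by intros; ring)

lemma lap_single (a : ℤ) (c : Rv) : Lap g (AddMonoidAlgebra.single a c) = c * g a :=
  Finsupp.sum_single_index (by simp)

lemma lap_neg : Lap g (-f) = - Lap g f := by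
  have := lap_add g f (-f)
  simp only [add_neg_cancel, lap_zero] at this
  exact (neg_eq_of_add_eq_zero_right this.symm).symm

lemma lap_one : Lap g 1 = g 0 := by
  rw [← LaurentPolynomial.single_zero_one_eq_one, lap_single, one_mul]

lemma lap_T (m : ℤ) : Lap g (T m) = g m := by
  rw [show (T m : LaurentPolynomial Rv) = AddMonoidAlgebra.single m 1 from rfl, lap_single, one_mul]

end lap

section ops
variable (g : ℤ → Rv)

lemma single_T_mul (m a : ℤ) (c : Rv) :
    (T m : LaurentPolynomial Rv) * (AddMonoidAlgebra.single a c : LaurentPolynomial Rv) =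
      (AddMonoidAlgebra.single (m + a) c : LaurentPolynomial Rv) := by
  rw [show (T m : LaurentPolynomial Rv) = AddMonoidAlgebra.single m 1 from rfl,
    AddMonoidAlgebra.single_mul_single, one_mul]

lemma single_C_mul (a : ℤ) (r c : Rv) :
    (C r : LaurentPolynomial Rv) * (AddMonoidAlgebra.single a c : LaurentPolynomial Rv) =
      (AddMonoidAlgebra.single a (r * c) : LaurentPolynomial Rv) := by
  rw [show (C r : LaurentPolynomial Rv) = AddMonoidAlgebra.single 0 r from rfl,
    AddMonoidAlgebra.single_mul_single, zero_add]

lemma invert_single (a : ℤ) (c : Rv) :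
    invert (AddMonoidAlgebra.single a c : LaurentPolynomial Rv) = AddMonoidAlgebra.single (-a) c := by
  ext n
  rw [invert_apply]
  simp only [AddMonoidAlgebra.coeff_single, Finsupp.single_apply]
  by_cases h : a = -n
  · simp [h]
  · rw [if_neg h, if_neg (by omega)]

lemma lap_T_mul (m : ℤ) (f : LaurentPolynomial Rv) :
    Lap g (T m * f) = Lap (fun a => g (m + a)) f := by
  induction f using AddMonoidAlgebra.induction with
  | zero => simp [lap_zero]
  | single_add a b f' _ _ ih =>
    rw [mul_add, lap_add, lap_add, ih, single_T_mul, lap_single, lap_single]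

lemma lap_C_mul (r : Rv) (f : LaurentPolynomial Rv) :
    Lap g (C r * f) = r * Lap g f := by
  induction f using AddMonoidAlgebra.induction with
  | zero => simp [lap_zero]
  | single_add a b f' _ _ ih =>
    rw [mul_add, lap_add, lap_add, ih, single_C_mul, lap_single, lap_single, mul_add, mul_assoc]

lemma lap_invert (f : LaurentPolynomial Rv) :
    Lap g (invert f) = Lap (fun a => g (-a)) f := by
  induction f using AddMonoidAlgebra.induction with
  | zero => simp [lap_zero]
  | single_add a b f' _ _ ih =>
    rw [map_add, lap_add, lap_add, ih, invert_single, lap_single, lap_single]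

lemma lap_const_mul (r : Rv) (f : LaurentPolynomial Rv) :
    Lap (fun a => r * g a) f = r * Lap g f := by
  rw [Lap, Lap, Finsupp.mul_sum]
  exact Finsupp.sum_congr fun a _ => by ring

/-- Twist: `x^a ↦ q^a x^a` (i.e. `f(x) ↦ f(qx)` with `q = v²`). -/
noncomputable def tw (f : LaurentPolynomial Rv) : LaurentPolynomial Rv :=
  Finsupp.sum f.coeff fun a c => AddMonoidAlgebra.single a (T (2*a) * c)

lemma tw_single (a : ℤ) (c : Rv) :
    tw (AddMonoidAlgebra.single a c) = AddMonoidAlgebra.single a (T (2*a) * c) :=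
  Finsupp.sum_single_index (by simp)

lemma tw_zero : tw 0 = 0 := Finsupp.sum_zero_index

lemma tw_add (f₁ f₂ : LaurentPolynomial Rv) : tw (f₁ + f₂) = tw f₁ + tw f₂ :=
  Finsupp.sum_add_index (by simp) (by intros; rw [mul_add]; exact AddMonoidAlgebra.single_add _ _ _)

lemma tw_one : tw 1 = 1 := by
  rw [← single_zero_one_eq_one, tw_single]
  norm_num

lemma tw_single_mul (a : ℤ) (b : Rv) (f₂ : LaurentPolynomial Rv) :
    tw (AddMonoidAlgebra.single a b * f₂) = tw (AddMonoidAlgebra.single a b) * tw f₂ := by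
  induction f₂ using AddMonoidAlgebra.induction with
  | zero => simp [tw_zero]
  | single_add a' b' f'' _ _ ih2 =>
    rw [mul_add, tw_add, tw_add, mul_add, ih2]
    congr 1
    rw [AddMonoidAlgebra.single_mul_single, tw_single, tw_single, tw_single,
      AddMonoidAlgebra.single_mul_single]
    congr 1
    rw [show 2 * (a + a') = 2*a + 2*a' by ring, T_add]
    ring

lemma tw_mul (f₁ f₂ : LaurentPolynomial Rv) : tw (f₁ * f₂) = tw f₁ * tw f₂ := by
  induction f₁ using AddMonoidAlgebra.induction with
  | zero => simp [tw_zero]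
  | single_add a b f' _ _ ih =>
    rw [add_mul, tw_add, tw_add, ih, add_mul, tw_single_mul]

/-- `tw` as a ring hom, for `map_prod` etc. -/
noncomputable def twHom : LaurentPolynomial Rv →+* LaurentPolynomial Rv where
  toFun := tw
  map_one' := tw_one
  map_mul' := tw_mul
  map_zero' := tw_zero
  map_add' := tw_add

lemma lap_tw (g : ℤ → Rv) (f : LaurentPolynomial Rv) :
    Lap g (tw f) = Lap (fun a => T (2*a) * g a) f := by
  induction f using AddMonoidAlgebra.induction with
  | zero => simp [lap_zero, tw_zero]
  | single_add a b f' _ _ ih =>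
    rw [tw_add, lap_add, lap_add, ih, tw_single, lap_single, lap_single]
    ring

lemma single_eq' (a : ℤ) (c : Rv) :
    (AddMonoidAlgebra.single a c : LaurentPolynomial Rv) = C c * T a :=
  single_eq_C_mul_T c a

lemma twHom_T1 : twHom (T 1) = C (T 2) * T 1 := by
  rw [show (T 1 : LaurentPolynomial Rv) = AddMonoidAlgebra.single 1 1 from rfl,
    show twHom (AddMonoidAlgebra.single 1 1) = tw (AddMonoidAlgebra.single 1 1) from rfl,
    tw_single, mul_one, single_eq']
  norm_num

lemma twHom_C (r : Rv) : twHom (C r) = C r := by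
  rw [show (C r : LaurentPolynomial Rv) = AddMonoidAlgebra.single 0 r from rfl,
    show twHom (AddMonoidAlgebra.single 0 r) = tw (AddMonoidAlgebra.single 0 r) from rfl,
    tw_single]
  norm_num

lemma T_prod {α : Type*} (s : Finset α) (h : α → ℤ) :
    (∏ i ∈ s, (T (h i) : Rv)) = T (∑ i ∈ s, h i) := by
  classical
  induction s using Finset.induction with
  | empty => simp [T_zero]
  | insert _ _ hx ih =>
    rw [Finset.prod_insert hx, Finset.sum_insert hx, ih, T_add]

/-- The symmetric window product `R_k = ∏_{j=-k}^{k} (1 - x q^j)`. -/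
noncomputable def Rk (k : ℕ) : LaurentPolynomial Rv :=
  ∏ i ∈ Finset.range (2*k+1), (1 - T 1 * C (T (2*((i:ℤ) - k))))

/-- `D k m = L(x^m R_k)` in the `(a+m)²` formulation. -/
noncomputable def D (k : ℕ) (m : ℤ) : Rv :=
  Lap (fun a => T ((a + m)^2)) (Rk k)

lemma tw_Rk (k : ℕ) :
    tw (Rk k) = ∏ i ∈ Finset.range (2*k+1), (1 - T 1 * C (T (2*((i:ℤ) - k) + 2))) := by
  rw [show tw (Rk k) = twHom (Rk k) from rfl, Rk, map_prod]
  refine Finset.prod_congr rfl fun i _ => ?_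
  rw [map_sub, map_one, map_mul, twHom_T1, twHom_C]
  congr 1
  rw [mul_comm (C (T 2) : LaurentPolynomial Rv) (T 1), mul_assoc, ← map_mul, ← T_add]
  congr 2
  ring

lemma shift_id (k : ℕ) :
    (1 - T 1 * C (T (-(2*(k:ℤ))))) * tw (Rk k) =
      (1 - T 1 * C (T (2*(k:ℤ)+2))) * Rk k := by
  set F : ℕ → LaurentPolynomial Rv := fun i => 1 - T 1 * C (T (2*((i:ℤ) - k))) with hF
  have e1 : ∏ i ∈ Finset.range (2*k+1+1), F i = Rk k * F (2*k+1) := by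
    rw [Finset.prod_range_succ]; rfl
  have e2 : ∏ i ∈ Finset.range (2*k+1+1), F i = (∏ i ∈ Finset.range (2*k+1), F (i+1)) * F 0 := by
    rw [Finset.prod_range_succ']
  have e3 : tw (Rk k) = ∏ i ∈ Finset.range (2*k+1), F (i+1) := by
    rw [tw_Rk]
    refine Finset.prod_congr rfl fun i _ => ?_
    simp only [hF]
    congr 4
    push_cast; ring
  have e4 : F (2*k+1) = 1 - T 1 * C (T (2*(k:ℤ)+2)) := by
    simp only [hF]
    congr 4
    push_cast; ring
  have e5 : F 0 = 1 - T 1 * C (T (-(2*(k:ℤ)))) := by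
    simp only [hF]
    congr 4
    push_cast; ring
  rw [e3, ← e5, mul_comm (F 0), ← e2, e1, e4, mul_comm (Rk k)]

lemma sum_win (k : ℕ) : ∑ i ∈ Finset.range (2*k+1), (2*((i:ℤ)-k)) = 0 := by
  induction k with
  | zero => simp
  | succ n ih =>
    have h1 : (2*(n+1)+1) = (2*n+1)+1+1 := by ring
    rw [h1, Finset.sum_range_succ, Finset.sum_range_succ']
    have h3 : ∀ i ∈ Finset.range (2*n+1), (2*((((i+1:ℕ)):ℤ) - ((n+1:ℕ):ℤ))) = 2*((i:ℤ)-n) := by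
      intro i _; push_cast; ring
    rw [Finset.sum_congr rfl h3, ih]
    push_cast; ring

lemma hflip (j : ℤ) : (1 - T (-1) * C (T (2*j)) : LaurentPolynomial Rv)
    = (-(T (-1) * C (T (2*j)) : LaurentPolynomial Rv)) *
      (1 - T 1 * C (T (-(2*j))) : LaurentPolynomial Rv) := by
  have h1 : (T (-1) * T 1 : LaurentPolynomial Rv) = 1 := by
    rw [← T_add, show (-1 + 1 : ℤ) = 0 by ring, T_zero]
  have h2 : (C (T (2*j)) * C (T (-(2*j))) : LaurentPolynomial Rv) = 1 := by
    rw [← map_mul, ← T_add, show 2*j + -(2*j) = 0 by ring, T_zero, map_one]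
  have hAB : (T (-1) * C (T (2*j)) * (T 1 * C (T (-(2*j)))) : LaurentPolynomial Rv) = 1 := by
    linear_combination (C (T (2*j)) * C (T (-(2*j))) : LaurentPolynomial Rv) * h1 + h2
  linear_combination - hAB

lemma inv_Rk (k : ℕ) : invert (Rk k) = -(T (-(2*(k:ℤ))-1) * Rk k) := by
  have hinv : invert (Rk k) =
      ∏ i ∈ Finset.range (2*k+1), (1 - T (-1) * C (T (2*((i:ℤ)-k)))) := by
    rw [Rk, map_prod]
    refine Finset.prod_congr rfl fun i _ => ?_
    rw [map_sub, map_one, map_mul, invert_T, invert_C]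
  have flipprod : (∏ i ∈ Finset.range (2*k+1), (1 - T (-1) * C (T (2*((i:ℤ)-k))) :
      LaurentPolynomial Rv))
      = (∏ i ∈ Finset.range (2*k+1), (-(T (-1) * C (T (2*((i:ℤ)-k))) : LaurentPolynomial Rv)))
        * (∏ i ∈ Finset.range (2*k+1), (1 - T 1 * C (T (-(2*((i:ℤ)-k)))))) := by
    rw [← Finset.prod_mul_distrib]
    exact Finset.prod_congr rfl fun i _ => hflip _
  have neg_prod : (∏ i ∈ Finset.range (2*k+1),
      (-(T (-1) * C (T (2*((i:ℤ)-k))) : LaurentPolynomial Rv)))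
      = -(T (-(2*(k:ℤ))-1)) := by
    have h4 : ∀ i ∈ Finset.range (2*k+1),
        (-(T (-1) * C (T (2*((i:ℤ)-k)))) : LaurentPolynomial Rv)
        = ((-1 : LaurentPolynomial Rv) * T (-1)) * C (T (2*((i:ℤ)-k))) := fun i _ => by ring
    rw [Finset.prod_congr rfl h4, Finset.prod_mul_distrib, Finset.prod_mul_distrib,
      Finset.prod_const, Finset.prod_const, ← map_prod, T_prod, sum_win, T_zero, map_one,
      mul_one, Finset.card_range]
    rw [show ((-1 : LaurentPolynomial Rv) ^ (2*k+1)) = -1 by rw [pow_succ, pow_mul]; norm_num]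
    rw [T_pow, show (((2*k+1 : ℕ) : ℤ) * (-1) : ℤ) = -(2*(k:ℤ))-1 by push_cast; ring]
    ring
  have hrefl : (∏ i ∈ Finset.range (2*k+1), (1 - T 1 * C (T (-(2*((i:ℤ)-k)))) :
      LaurentPolynomial Rv)) = Rk k := by
    rw [Rk, ← Finset.prod_range_reflect (fun j => (1 - T 1 * C (T (2*((j:ℤ) - k))) :
      LaurentPolynomial Rv)) (2*k+1)]
    refine Finset.prod_congr rfl fun i hi => ?_
    have hi2 : i < 2*k+1 := Finset.mem_range.mp hi
    congr 4
    omega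
  rw [hinv, flipprod, neg_prod, hrefl]
  ring

lemma lap_sub (g : ℤ → Rv) (f₁ f₂ : LaurentPolynomial Rv) :
    Lap g (f₁ - f₂) = Lap g f₁ - Lap g f₂ := by
  rw [sub_eq_add_neg, lap_add, lap_neg, sub_eq_add_neg]

lemma lap_arg (g₁ g₂ : ℤ → Rv) (h : ∀ a, g₁ a = g₂ a) (f : LaurentPolynomial Rv) :
    Lap g₁ f = Lap g₂ f := by
  rw [show g₁ = g₂ from funext h]

lemma lap_T_mul_Rk (k : ℕ) (m n : ℤ) :
    Lap (fun a => T ((a + m)^2)) (T n * Rk k) = D k (m + n) := by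
  rw [lap_T_mul, D]
  exact lap_arg _ _ (fun a => by congr 1; ring) _

lemma lap_Rk (k : ℕ) (m : ℤ) : Lap (fun a => T ((a + m)^2)) (Rk k) = D k m := rfl

lemma lap_tw_Rk (k : ℕ) (m : ℤ) :
    Lap (fun a => T ((a + m)^2)) (tw (Rk k)) = T (-(2*m+1)) * D k (m + 1) := by
  rw [lap_tw]
  rw [lap_arg _ (fun a => T (-(2*m+1)) * T ((a + (m+1))^2))
    (fun a => by show _ = T (-(2*m+1)) * T ((a + (m+1))^2); rw [← T_add, ← T_add]; congr 1; ring) _]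
  rw [lap_const_mul, lap_Rk]

lemma lap_T1_tw_Rk (k : ℕ) (m : ℤ) :
    Lap (fun a => T ((a + m)^2)) (T 1 * tw (Rk k)) = T (-(2*m+3)) * D k (m + 2) := by
  rw [lap_T_mul, lap_tw]
  rw [lap_arg _ (fun a => T (-(2*m+3)) * T ((a + (m+2))^2))
    (fun a => by show _ = T (-(2*m+3)) * T ((a + (m+2))^2); rw [← T_add, ← T_add]; congr 1; ring) _]
  rw [lap_const_mul, lap_Rk]

lemma D_shift (k : ℕ) (m : ℤ) :
    T (-(2*m+1)) * D k (m+1) - T (-(2*(k:ℤ))) * (T (-(2*m+3)) * D k (m+2))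
      = D k m - T (2*(k:ℤ)+2) * D k (m+1) := by
  have h := congrArg (Lap (fun a => T ((a + m)^2))) (shift_id k)
  rw [show (1 - T 1 * C (T (-(2*(k:ℤ)))) : LaurentPolynomial Rv) * tw (Rk k)
      = tw (Rk k) - C (T (-(2*(k:ℤ)))) * (T 1 * tw (Rk k)) by ring,
    show (1 - T 1 * C (T (2*(k:ℤ)+2)) : LaurentPolynomial Rv) * Rk k
      = Rk k - C (T (2*(k:ℤ)+2)) * (T 1 * Rk k) by ring,
    lap_sub, lap_sub, lap_C_mul, lap_C_mul, lap_tw_Rk, lap_T1_tw_Rk, lap_Rk,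
    lap_T_mul_Rk] at h
  convert h using 3

lemma D_anti (k : ℕ) (m : ℤ) : D k m = - D k (-(m + (2*(k:ℤ)+1))) := by
  have hR : Rk k = -(T (2*(k:ℤ)+1) * invert (Rk k)) := by
    rw [inv_Rk]
    have hTT : (T (2*(k:ℤ)+1) * T (-(2*(k:ℤ))-1) : LaurentPolynomial Rv) = 1 := by
      rw [← T_add, show (2*(k:ℤ)+1) + (-(2*(k:ℤ))-1) = 0 by ring, T_zero]
    linear_combination (-(Rk k)) * hTT
  have : D k m = Lap (fun a => T ((a + m)^2)) (-(T (2*(k:ℤ)+1) * invert (Rk k))) := by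
    rw [← hR, lap_Rk]
  rw [this, lap_neg, lap_T_mul, lap_invert]
  congr 1
  rw [D]
  exact lap_arg _ _ (fun a => by congr 1; ring) _

lemma E_neg (k : ℕ) : D k (-(k:ℤ)) = - D k (-(k:ℤ)-1) := by
  have h := D_anti k (-(k:ℤ)-1)
  rw [show (-((-(k:ℤ)-1) + (2*(k:ℤ)+1))) = -(k:ℤ) by ring] at h
  rw [h, neg_neg]

lemma D_down (k : ℕ) :
    D k (-(k:ℤ)-2) = (T (2*(k:ℤ)+3) + T (2*(k:ℤ)+2) + T 1) * D k (-(k:ℤ)-1) := by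
  have h := D_shift k (-(k:ℤ)-2)
  rw [show (-(2*(-(k:ℤ)-2)+1)) = 2*(k:ℤ)+3 by ring, show ((-(k:ℤ)-2)+1) = -(k:ℤ)-1 by ring,
    show (-(2*(-(k:ℤ)-2)+3)) = 2*(k:ℤ)+1 by ring, show ((-(k:ℤ)-2)+2) = -(k:ℤ) by ring,
    E_neg k] at h
  have hT : (T (-(2*(k:ℤ))) * T (2*(k:ℤ)+1) : Rv) = T 1 := by
    rw [← T_add, show (-(2*(k:ℤ)) + (2*(k:ℤ)+1)) = 1 by ring]
  linear_combination -h + (D k (-(k:ℤ)-1)) * hT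

lemma Rk_succ (k : ℕ) :
    Rk (k+1) = (1 - T 1 * C (T (-(2*(k:ℤ))-2))) * Rk k * (1 - T 1 * C (T (2*(k:ℤ)+2))) := by
  have h1 : 2*(k+1)+1 = (2*k+1)+1+1 := by ring
  rw [Rk, h1, Finset.prod_range_succ, Finset.prod_range_succ']
  have e1 : ∀ i ∈ Finset.range (2*k+1),
      (1 - T 1 * C (T (2*((((i+1:ℕ)):ℤ) - ((k+1:ℕ):ℤ)))) : LaurentPolynomial Rv)
      = 1 - T 1 * C (T (2*((i:ℤ) - k))) := by
    intro i _; congr 4; push_cast; ring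
  rw [Finset.prod_congr rfl e1, ← Rk]
  have e2 : (1 - T 1 * C (T (2*((((0:ℕ)):ℤ) - ((k+1:ℕ):ℤ)))) : LaurentPolynomial Rv)
      = 1 - T 1 * C (T (-(2*(k:ℤ))-2)) := by congr 4; push_cast; ring
  have e3 : (1 - T 1 * C (T (2*(((((2*k+1)+1:ℕ)):ℤ) - ((k+1:ℕ):ℤ)))) : LaurentPolynomial Rv)
      = 1 - T 1 * C (T (2*(k:ℤ)+2)) := by congr 4; push_cast; ring
  rw [e2, e3]
  ring

lemma D_succ (k : ℕ) (m : ℤ) :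
    D (k+1) m = D k m + D k (m+2)
      - (T (2*(k:ℤ)+2) * D k (m+1) + T (-(2*(k:ℤ))-2) * D k (m+1)) := by
  have hcc : (C (T (-(2*(k:ℤ))-2)) * C (T (2*(k:ℤ)+2)) : LaurentPolynomial Rv) = 1 := by
    rw [← map_mul, ← T_add, show (-(2*(k:ℤ))-2) + (2*(k:ℤ)+2) = 0 by ring, T_zero, map_one]
  have hT2 : (T 1 * T 1 : LaurentPolynomial Rv) = T 2 := by
    rw [← T_add, show (1 + 1 : ℤ) = 2 by ring]
  have hexp : Rk (k+1) = Rk k + T 2 * Rk k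
      - (C (T (2*(k:ℤ)+2)) * (T 1 * Rk k) + C (T (-(2*(k:ℤ))-2)) * (T 1 * Rk k)) := by
    rw [Rk_succ]
    linear_combination (Rk k * T 1 * T 1) * hcc + (Rk k) * hT2
  have h := congrArg (Lap (fun a => T ((a + m)^2))) hexp
  rw [lap_sub, lap_add, lap_add, lap_C_mul, lap_C_mul, lap_Rk, lap_Rk, lap_T_mul_Rk,
    lap_T_mul_Rk] at h
  exact h

lemma E_succ (k : ℕ) :
    D (k+1) (-(k:ℤ)-2)
      = (T (2*(k:ℤ)+3) + T 1 - 1 - T (-(2*(k:ℤ))-2)) * D k (-(k:ℤ)-1) := by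
  have h := D_succ k (-(k:ℤ)-2)
  rw [show (-(k:ℤ)-2)+2 = -(k:ℤ) by ring, show (-(k:ℤ)-2)+1 = -(k:ℤ)-1 by ring,
    E_neg, D_down] at h
  rw [h]; ring

lemma sum2 (n : ℕ) : ∑ i ∈ Finset.range (n+1), 2*(i:ℤ) = (n:ℤ)*((n:ℤ)+1) := by
  induction n with
  | zero => simp
  | succ m ih => rw [Finset.sum_range_succ, ih]; push_cast; ring

lemma P2_eq (k : ℕ) :
    (∏ i ∈ Finset.range (k+1), (1 - T (-1) * C (T 2 ^ i)) : LaurentPolynomial Rv)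
      = ((-1 : LaurentPolynomial Rv)^(k+1))
        * (C (T ((k:ℤ)*((k:ℤ)+1))) * (T (-(k:ℤ)-1)
          * ∏ i ∈ Finset.range (k+1), (1 - T 1 * C (T (-(2*(i:ℤ)))) : LaurentPolynomial Rv))) := by
  have e1 : ∀ i ∈ Finset.range (k+1),
      (1 - T (-1) * C (T 2 ^ i) : LaurentPolynomial Rv)
      = ((-1 : LaurentPolynomial Rv) * T (-1) * C (T (2*(i:ℤ))))
        * (1 - T 1 * C (T (-(2*(i:ℤ))))) := by
    intro i _
    have : (T 2 ^ i : Rv) = T (2*(i:ℤ)) := by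
      rw [T_pow]; congr 1; push_cast; ring
    rw [this]
    have := hflip (i:ℤ)
    linear_combination this
  rw [Finset.prod_congr rfl e1, Finset.prod_mul_distrib, Finset.prod_mul_distrib,
    Finset.prod_mul_distrib, Finset.prod_const, Finset.prod_const, ← map_prod,
    T_prod, sum2, Finset.card_range, T_pow]
  rw [show (((k+1 : ℕ)):ℤ) * (-1) = -(k:ℤ)-1 by push_cast; ring]
  ring

lemma P1_eq (k : ℕ) :
    (∏ i ∈ Finset.range (k+1), (1 - T 1 * C (T 2 ^ i)) : LaurentPolynomial Rv)
      * (∏ i ∈ Finset.range (k+1), (1 - T 1 * C (T (-(2*(i:ℤ))))))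
      = (1 - T 1) * Rk k := by
  have hRk : Rk k = (∏ i ∈ Finset.range k, (1 - T 1 * C (T (2*((i:ℤ)-k)))))
      * ∏ i ∈ Finset.range (k+1), (1 - T 1 * C (T 2 ^ i)) := by
    rw [Rk, show 2*k+1 = k + (k+1) by ring, Finset.prod_range_add]
    refine congrArg (_ * ·) ?_
    refine Finset.prod_congr rfl fun i _ => ?_
    have : (T 2 ^ i : Rv) = T (2*(i:ℤ)) := by rw [T_pow]; congr 1; push_cast; ring
    rw [this]
    congr 4
    push_cast; ring
  have hQ : (∏ i ∈ Finset.range (k+1), (1 - T 1 * C (T (-(2*(i:ℤ))))) : LaurentPolynomial Rv)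
      = (∏ i ∈ Finset.range k, (1 - T 1 * C (T (2*((i:ℤ)-k))))) * (1 - T 1) := by
    rw [Finset.prod_range_succ']
    refine congrArg₂ (· * ·) ?_ ?_
    · rw [← Finset.prod_range_reflect (fun j => (1 - T 1 * C (T (2*((j:ℤ) - k))) :
        LaurentPolynomial Rv)) k]
      refine Finset.prod_congr rfl fun i hi => ?_
      have hi2 : i < k := Finset.mem_range.mp hi
      congr 4
      omega
    · rw [show (-(2*(((0:ℕ)):ℤ))) = 0 by norm_num, T_zero]
      simp
  simp only [hQ, hRk]
  ring

lemma A_eq (k : ℕ) :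
    Lap (fun a => T (a ^ 2))
        ((∏ i ∈ Finset.range (k + 1), (1 - T 1 * C (T 2 ^ i))) *
          ∏ i ∈ Finset.range (k + 1), (1 - T (-1) * C (T 2 ^ i)))
      = (-1 : Rv)^(k+1) * (T ((k:ℤ)*((k:ℤ)+1)) * (2 * D k (-(k:ℤ)-1))) := by
  have hpoly :
      ((∏ i ∈ Finset.range (k + 1), (1 - T 1 * C (T 2 ^ i))) *
          ∏ i ∈ Finset.range (k + 1), (1 - T (-1) * C (T 2 ^ i)) : LaurentPolynomial Rv)
      = C ((-1 : Rv)^(k+1)) * (C (T ((k:ℤ)*((k:ℤ)+1)))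
          * (T (-(k:ℤ)-1) * Rk k - (T (-(k:ℤ)) * Rk k))) := by
    rw [P2_eq]
    have hC : ((-1 : LaurentPolynomial Rv)^(k+1)) = C ((-1 : Rv)^(k+1)) := by
      rw [map_pow, map_neg, map_one]
    rw [← hC]
    have hTT : (T (-(k:ℤ)-1) * T 1 : LaurentPolynomial Rv) = T (-(k:ℤ)) := by
      rw [← T_add, show (-(k:ℤ)-1) + 1 = -(k:ℤ) by ring]
    calc (∏ i ∈ Finset.range (k + 1), (1 - T 1 * C (T 2 ^ i)) : LaurentPolynomial Rv) *
        ((-1 : LaurentPolynomial Rv)^(k+1) * (C (T ((k:ℤ)*((k:ℤ)+1))) * (T (-(k:ℤ)-1)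
          * ∏ i ∈ Finset.range (k+1), (1 - T 1 * C (T (-(2*(i:ℤ)))) : LaurentPolynomial Rv))))
        = (-1 : LaurentPolynomial Rv)^(k+1) * (C (T ((k:ℤ)*((k:ℤ)+1))) * (T (-(k:ℤ)-1)
          * ((∏ i ∈ Finset.range (k + 1), (1 - T 1 * C (T 2 ^ i)) : LaurentPolynomial Rv) *
             ∏ i ∈ Finset.range (k+1), (1 - T 1 * C (T (-(2*(i:ℤ)))) :
               LaurentPolynomial Rv)))) := by ring
      _ = _ := by rw [P1_eq]; linear_combination ((-1 : LaurentPolynomial Rv)^k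
            * C (T ((k:ℤ)*((k:ℤ)+1))) * Rk k) * hTT
  rw [hpoly, lap_C_mul, lap_C_mul,
    lap_arg (fun a => T (a^2)) (fun a => T ((a + (0:ℤ))^2)) (fun a => by congr 1; ring),
    lap_sub, lap_T_mul_Rk, lap_T_mul_Rk]
  rw [show (0 + (-(k:ℤ)-1)) = -(k:ℤ)-1 by ring, show (0 + (-(k:ℤ))) = -(k:ℤ) by ring, E_neg]
  ring

/-- Lemma 5.2 (first formula): with `q = v²` and `L_{-2} : x^a ↦ v^{a²}`,
`L_{-2}((x;q)_{k+1}(x^{-1};q)_{k+1}) = 2 (1-v) (-v²;-v)_{2k}`. -/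
theorem laplace_neg_two (k : ℕ) :
    Lap (fun a => T (a ^ 2))
        ((∏ i ∈ Finset.range (k + 1), (1 - T 1 * C (T 2 ^ i))) *
          ∏ i ∈ Finset.range (k + 1), (1 - T (-1) * C (T 2 ^ i))) =
      2 * (1 - T 1) * ∏ i ∈ Finset.range (2 * k), (1 + (-T 1) ^ (i + 2)) := by
  induction k with
  | zero =>
    rw [A_eq 0]
    have hR0 : Rk 0 = 1 - T 1 := by
      rw [Rk]
      norm_num [Finset.prod_range_one, T_zero]
    have hD : D 0 (-((0:ℕ):ℤ)-1) = T 1 - 1 := by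
      rw [D, hR0, lap_sub, lap_one, lap_T]
      norm_num [T_zero]
    rw [hD, show (((0:ℕ):ℤ))*((((0:ℕ)):ℤ)+1) = 0 by norm_num, T_zero]
    norm_num
    ring
  | succ n ih =>
    rw [A_eq (n+1), show (-(((n+1):ℕ):ℤ)-1) = -(n:ℤ)-2 by push_cast; ring, E_succ]
    rw [A_eq n] at ih
    have ha : ((-T 1 : Rv))^(2*n+2) = T (2*(n:ℤ)+2) := by
      have he : Even (2*n+2) := ⟨n+1, by ring⟩
      rw [he.neg_pow, T_pow]
      congr 1; push_cast; ring
    have hb : ((-T 1 : Rv))^(2*n+1+2) = -T (2*(n:ℤ)+3) := by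
      have ho : Odd (2*n+1+2) := ⟨n+1, by ring⟩
      rw [ho.neg_pow, T_pow]
      congr 2; push_cast; ring
    have hRHS : (∏ i ∈ Finset.range (2*(n+1)), (1 + (-T 1)^(i+2)) : Rv)
        = (∏ i ∈ Finset.range (2*n), (1 + (-T 1)^(i+2)))
          * ((1 + T (2*(n:ℤ)+2)) * (1 - T (2*(n:ℤ)+3))) := by
      rw [show 2*(n+1) = (2*n)+1+1 by ring, Finset.prod_range_succ, Finset.prod_range_succ,
        ha, hb]
      ring
    rw [hRHS]
    have hmul : (-(T (2*(n:ℤ)+2)) * (T (2*(n:ℤ)+3) + T 1 - 1 - T (-(2*(n:ℤ))-2)) : Rv)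
        = (1 + T (2*(n:ℤ)+2)) * (1 - T (2*(n:ℤ)+3)) := by
      have h1 : (T (2*(n:ℤ)+2) * T 1 : Rv) = T (2*(n:ℤ)+3) := by
        rw [← T_add, show (2*(n:ℤ)+2) + 1 = 2*(n:ℤ)+3 by ring]
      have h2 : (T (2*(n:ℤ)+2) * T (-(2*(n:ℤ))-2) : Rv) = 1 := by
        rw [← T_add, show (2*(n:ℤ)+2) + (-(2*(n:ℤ))-2) = 0 by ring, T_zero]
      linear_combination -h1 + h2
    rw [pow_succ]
    rw [show ((((n+1):ℕ):ℤ))*((((n+1):ℕ):ℤ)+1) = (n:ℤ)*((n:ℤ)+1) + (2*(n:ℤ)+2)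
        by push_cast; ring, T_add]
    linear_combination ((1 + T (2*(n:ℤ)+2)) * (1 - T (2*(n:ℤ)+3))) * ih
      + ((-1:Rv)^(n+1) * T ((n:ℤ)*((n:ℤ)+1)) * 2 * D n (-(n:ℤ)-1)) * hmul
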